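/- Let Q : ℝ³ → ℝ⁴ be the map Q(r,θ,φ) = (Cκ₁(r), Sκ₁(r)Cκ₂(θ), Sκ₁(r)Sκ₂(θ)cos φ, Sκ₁(r)Sκ₂(θ)sin φ). Then: (i) Q lands on the quadric Σ, i.e. x₀² + κ₁x₁² + κ₁κ₂x₂² + κ₁κ₂x₃² = 1 where (x₀,x₁,x₂,x₃) = Q(r,θ,φ), for all (r,θ,φ) ∈ ℝ³; and (ii) if κ₁ ≠ 0, the pullback by Q of the ambient quadratic form (1/κ₁)(dx₀² + κ₁dx₁² + κ₁κ₂dx₂² + κ₁κ₂dx₃²) is the metric of the space ${\mathbb S}^3_{[κ₁]κ₂}$ in geodesic polar coordinates: for every point (r,θ,φ) and every pair of tangent vectors u = (u_r,u_θ,u_φ), v = (v_r,v_θ,v_φ) ∈ ℝ³, writing DQ for the total derivative of Q, one has (1/κ₁)(DQ(u)₀DQ(v)₀ + κ₁DQ(u)₁DQ(v)₁ + κ₁κ₂DQ(u)₂DQ(v)₂ + κ₁κ₂DQ(u)₃DQ(v)₃) = u_r v_r + κ₂Sκ₁(r)²(u_θ v_θ + Sκ₂(θ)² u_φ v_φ).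 -/

import Mathlib

namespace Paper
noncomputable section

/-- The κ-dependent cosine Cκ(x) = ∑ (−κ)^l x^{2l}/(2l)!. -/
def Ck (κ x : ℝ) : ℝ := ∑' l : ℕ, (-κ) ^ l * x ^ (2 * l) / (Nat.factorial (2 * l) : ℝ)

/-- The κ-dependent sine Sκ(x) = ∑ (−κ)^l x^{2l+1}/(2l+1)!. -/
def Sk (κ x : ℝ) : ℝ := ∑' l : ℕ, (-κ) ^ l * x ^ (2 * l + 1) / (Nat.factorial (2 * l + 1) : ℝ)

/-- The parametrization Q(r,θ,φ) of the space 𝕊³_{[κ₁]κ₂} in geodesic polar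
coordinates, with (r,θ,φ) = (y 0, y 1, y 2) and ambient coordinates
(x₀,x₁,x₂,x₃) indexed by Fin 4. -/
def Qmap (κ₁ κ₂ : ℝ) (y : Fin 3 → ℝ) : Fin 4 → ℝ :=
  ![Ck κ₁ (y 0),
    Sk κ₁ (y 0) * Ck κ₂ (y 1),
    Sk κ₁ (y 0) * Sk κ₂ (y 1) * Real.cos (y 2),
    Sk κ₁ (y 0) * Sk κ₂ (y 1) * Real.sin (y 2)]

lemma Ck_pos {κ : ℝ} (hκ : 0 < κ) (x : ℝ) : Ck κ x = Real.cos (Real.sqrt κ * x) := by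
  rw [Ck, Real.cos_eq_tsum]
  refine tsum_congr fun l => ?_
  rw [mul_pow, show (Real.sqrt κ) ^ (2*l) = κ ^ l by rw [pow_mul, Real.sq_sqrt hκ.le]]
  ring

lemma Sk_pos {κ : ℝ} (hκ : 0 < κ) (x : ℝ) :
    Sk κ x = Real.sin (Real.sqrt κ * x) / Real.sqrt κ := by
  have hs : Real.sqrt κ ≠ 0 := ne_of_gt (Real.sqrt_pos.2 hκ)
  have h := (Real.hasSum_sin (Real.sqrt κ * x)).div_const (Real.sqrt κ)
  rw [Sk, ← h.tsum_eq]
  refine tsum_congr fun l => ?_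
  rw [mul_pow, show (Real.sqrt κ) ^ (2*l+1) = κ ^ l * Real.sqrt κ by rw [pow_succ, pow_mul, Real.sq_sqrt hκ.le]]
  field_simp
  ring

lemma Ck_neg {κ : ℝ} (hκ : κ < 0) (x : ℝ) : Ck κ x = Real.cosh (Real.sqrt (-κ) * x) := by
  rw [Ck, Real.cosh_eq_tsum]
  refine tsum_congr fun l => ?_
  rw [mul_pow, show (Real.sqrt (-κ)) ^ (2*l) = (-κ) ^ l by
    rw [pow_mul, Real.sq_sqrt (by linarith)]]

lemma Sk_neg {κ : ℝ} (hκ : κ < 0) (x : ℝ) :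
    Sk κ x = Real.sinh (Real.sqrt (-κ) * x) / Real.sqrt (-κ) := by
  have hs : Real.sqrt (-κ) ≠ 0 := ne_of_gt (Real.sqrt_pos.2 (by linarith))
  have h := (Real.hasSum_sinh (Real.sqrt (-κ) * x)).div_const (Real.sqrt (-κ))
  rw [Sk, ← h.tsum_eq]
  refine tsum_congr fun l => ?_
  rw [mul_pow, show (Real.sqrt (-κ)) ^ (2*l+1) = (-κ) ^ l * Real.sqrt (-κ) by
    rw [pow_succ, pow_mul, Real.sq_sqrt (by linarith)]]
  field_simp

lemma Ck_zero (x : ℝ) : Ck 0 x = 1 := by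
  rw [Ck, tsum_eq_single 0 (fun l hl => by simp [zero_pow hl])]
  simp

lemma Sk_zero (x : ℝ) : Sk 0 x = x := by
  rw [Sk, tsum_eq_single 0 (fun l hl => by simp [zero_pow hl])]
  simp

lemma ck_sk_sq (κ x : ℝ) : Ck κ x ^ 2 + κ * Sk κ x ^ 2 = 1 := by
  rcases lt_trichotomy κ 0 with hκ | hκ | hκ
  · rw [Ck_neg hκ, Sk_neg hκ]
    have hs : Real.sqrt (-κ) ^ 2 = -κ := Real.sq_sqrt (by linarith)
    have hs0 : Real.sqrt (-κ) ≠ 0 := ne_of_gt (Real.sqrt_pos.2 (by linarith))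
    have h := Real.cosh_sq_sub_sinh_sq (Real.sqrt (-κ) * x)
    field_simp
    nlinarith [h]
  · simp [hκ, Ck_zero]
  · rw [Ck_pos hκ, Sk_pos hκ]
    have hs : Real.sqrt κ ^ 2 = κ := Real.sq_sqrt hκ.le
    have hs0 : Real.sqrt κ ≠ 0 := ne_of_gt (Real.sqrt_pos.2 hκ)
    have h := Real.sin_sq_add_cos_sq (Real.sqrt κ * x)
    field_simp
    linear_combination κ * h + (Real.cos (Real.sqrt κ * x) ^ 2 - 1) * hs

lemma hasDerivAt_Sk (κ x : ℝ) : HasDerivAt (Sk κ) (Ck κ x) x := by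
  rcases lt_trichotomy κ 0 with hκ | hκ | hκ
  · have hs0 : Real.sqrt (-κ) ≠ 0 := ne_of_gt (Real.sqrt_pos.2 (by linarith))
    have hfun : Sk κ = fun t => Real.sinh (Real.sqrt (-κ) * t) / Real.sqrt (-κ) :=
      funext fun t => Sk_neg hκ t
    rw [hfun, Ck_neg hκ]
    have h := ((Real.hasDerivAt_sinh (Real.sqrt (-κ) * x)).comp x
      ((hasDerivAt_id x).const_mul (Real.sqrt (-κ)))).div_const (Real.sqrt (-κ))
    simp only [Function.comp_def, id_eq] at h
    refine h.congr_deriv ?_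
    field_simp
  · have hfun : Sk κ = fun t => t := funext fun t => by rw [hκ]; exact Sk_zero t
    rw [hfun, hκ, Ck_zero]
    exact hasDerivAt_id x
  · have hs0 : Real.sqrt κ ≠ 0 := ne_of_gt (Real.sqrt_pos.2 hκ)
    have hfun : Sk κ = fun t => Real.sin (Real.sqrt κ * t) / Real.sqrt κ :=
      funext fun t => Sk_pos hκ t
    rw [hfun, Ck_pos hκ]
    have h := ((Real.hasDerivAt_sin (Real.sqrt κ * x)).comp x
      ((hasDerivAt_id x).const_mul (Real.sqrt κ))).div_const (Real.sqrt κ)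
    simp only [Function.comp_def, id_eq] at h
    refine h.congr_deriv ?_
    field_simp

lemma hasDerivAt_Ck (κ x : ℝ) : HasDerivAt (Ck κ) (-κ * Sk κ x) x := by
  rcases lt_trichotomy κ 0 with hκ | hκ | hκ
  · have hs0 : Real.sqrt (-κ) ≠ 0 := ne_of_gt (Real.sqrt_pos.2 (by linarith))
    have hsq : Real.sqrt (-κ) ^ 2 = -κ := Real.sq_sqrt (by linarith)
    have hfun : Ck κ = fun t => Real.cosh (Real.sqrt (-κ) * t) :=
      funext fun t => Ck_neg hκ t
    rw [hfun, Sk_neg hκ]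
    have h := (Real.hasDerivAt_cosh (Real.sqrt (-κ) * x)).comp x
      ((hasDerivAt_id x).const_mul (Real.sqrt (-κ)))
    simp only [Function.comp_def, id_eq] at h
    refine h.congr_deriv ?_
    field_simp
    linear_combination Real.sinh (Real.sqrt (-κ) * x) * hsq
  · have hfun : Ck κ = fun _ => (1:ℝ) := funext fun t => by rw [hκ]; exact Ck_zero t
    rw [hfun, hκ]
    simpa using hasDerivAt_const x (1:ℝ)
  · have hs0 : Real.sqrt κ ≠ 0 := ne_of_gt (Real.sqrt_pos.2 hκ)
    have hsq : Real.sqrt κ ^ 2 = κ := Real.sq_sqrt hκ.le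
    have hfun : Ck κ = fun t => Real.cos (Real.sqrt κ * t) :=
      funext fun t => Ck_pos hκ t
    rw [hfun, Sk_pos hκ]
    have h := (Real.hasDerivAt_cos (Real.sqrt κ * x)).comp x
      ((hasDerivAt_id x).const_mul (Real.sqrt κ))
    simp only [Function.comp_def, id_eq] at h
    refine h.congr_deriv ?_
    field_simp
    linear_combination -Real.sin (Real.sqrt κ * x) * hsq

/-- (i) Q lands on the quadric Σ: x₀² + κ₁x₁² + κ₁κ₂x₂² + κ₁κ₂x₃² = 1;
(ii) if κ₁ ≠ 0, the pullback by Q of the ambient quadratic form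
(1/κ₁)(dx₀² + κ₁dx₁² + κ₁κ₂dx₂² + κ₁κ₂dx₃²) is the geodesic polar metric
dr² + κ₂Sκ₁(r)²(dθ² + Sκ₂(θ)²dφ²). -/
theorem ambient_parametrization_and_metric (κ₁ κ₂ : ℝ) :
    (∀ y : Fin 3 → ℝ,
      Qmap κ₁ κ₂ y 0 ^ 2 + κ₁ * Qmap κ₁ κ₂ y 1 ^ 2
        + κ₁ * κ₂ * Qmap κ₁ κ₂ y 2 ^ 2 + κ₁ * κ₂ * Qmap κ₁ κ₂ y 3 ^ 2 = 1) ∧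
    (κ₁ ≠ 0 → ∀ (y u v : Fin 3 → ℝ),
      (1 / κ₁) *
        (fderiv ℝ (Qmap κ₁ κ₂) y u 0 * fderiv ℝ (Qmap κ₁ κ₂) y v 0
          + κ₁ * (fderiv ℝ (Qmap κ₁ κ₂) y u 1 * fderiv ℝ (Qmap κ₁ κ₂) y v 1)
          + κ₁ * κ₂ * (fderiv ℝ (Qmap κ₁ κ₂) y u 2 * fderiv ℝ (Qmap κ₁ κ₂) y v 2)
          + κ₁ * κ₂ * (fderiv ℝ (Qmap κ₁ κ₂) y u 3 * fderiv ℝ (Qmap κ₁ κ₂) y v 3))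
        = u 0 * v 0 + κ₂ * Sk κ₁ (y 0) ^ 2 * (u 1 * v 1 + Sk κ₂ (y 1) ^ 2 * (u 2 * v 2))) := by
  constructor
  · intro y
    have h1 := ck_sk_sq κ₁ (y 0)
    have h2 := ck_sk_sq κ₂ (y 1)
    have h3 := Real.sin_sq_add_cos_sq (y 2)
    simp only [Qmap, Matrix.cons_val_zero, Matrix.cons_val_one, Matrix.head_cons,
      Matrix.cons_val_two, Matrix.tail_cons, Matrix.cons_val_three]
    linear_combination h1 + (κ₁ * Sk κ₁ (y 0) ^ 2) * h2
      + (κ₁ * κ₂ * Sk κ₁ (y 0) ^ 2 * Sk κ₂ (y 1) ^ 2) * h3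
  · intro hκ₁ y u v
    set c1 := Ck κ₁ (y 0)
    set s1 := Sk κ₁ (y 0)
    set c2 := Ck κ₂ (y 1)
    set s2 := Sk κ₂ (y 1)
    set cφ := Real.cos (y 2)
    set sφ := Real.sin (y 2)
    let P : Fin 3 → (Fin 3 → ℝ) →L[ℝ] ℝ := fun i => ContinuousLinearMap.proj i
    have hp0 : HasFDerivAt (fun y : Fin 3 → ℝ => Ck κ₁ (y 0)) ((-κ₁ * s1) • P 0) y :=
      (hasDerivAt_Ck κ₁ (y 0)).comp_hasFDerivAt (f := fun y : Fin 3 → ℝ => y 0) y (hasFDerivAt_apply 0 y)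
    have hs1 : HasFDerivAt (fun y : Fin 3 → ℝ => Sk κ₁ (y 0)) (c1 • P 0) y :=
      (hasDerivAt_Sk κ₁ (y 0)).comp_hasFDerivAt (f := fun y : Fin 3 → ℝ => y 0) y (hasFDerivAt_apply 0 y)
    have hc2 : HasFDerivAt (fun y : Fin 3 → ℝ => Ck κ₂ (y 1)) ((-κ₂ * s2) • P 1) y :=
      (hasDerivAt_Ck κ₂ (y 1)).comp_hasFDerivAt (f := fun y : Fin 3 → ℝ => y 1) y (hasFDerivAt_apply 1 y)
    have hs2 : HasFDerivAt (fun y : Fin 3 → ℝ => Sk κ₂ (y 1)) (c2 • P 1) y :=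
      (hasDerivAt_Sk κ₂ (y 1)).comp_hasFDerivAt (f := fun y : Fin 3 → ℝ => y 1) y (hasFDerivAt_apply 1 y)
    have hcφ : HasFDerivAt (fun y : Fin 3 → ℝ => Real.cos (y 2)) ((-sφ) • P 2) y :=
      (Real.hasDerivAt_cos (y 2)).comp_hasFDerivAt (f := fun y : Fin 3 → ℝ => y 2) y (hasFDerivAt_apply 2 y)
    have hsφ : HasFDerivAt (fun y : Fin 3 → ℝ => Real.sin (y 2)) (cφ • P 2) y :=
      (Real.hasDerivAt_sin (y 2)).comp_hasFDerivAt (f := fun y : Fin 3 → ℝ => y 2) y (hasFDerivAt_apply 2 y)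
    have hmul1 := hs1.mul hc2
    have hmul12 := hs1.mul hs2
    have hmul2 := hmul12.mul hcφ
    have hmul3 := hmul12.mul hsφ
    set D0 := (-κ₁ * s1) • P 0
    set D1 := s1 • ((-κ₂ * s2) • P 1) + c2 • (c1 • P 0)
    set D12 := s1 • (c2 • P 1) + s2 • (c1 • P 0)
    set D2 := (s1 * s2) • ((-sφ) • P 2) + cφ • D12
    set D3 := (s1 * s2) • (cφ • P 2) + sφ • D12
    have hQ : HasFDerivAt (Qmap κ₁ κ₂) (ContinuousLinearMap.pi ![D0, D1, D2, D3]) y := by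
      apply hasFDerivAt_pi.2
      intro i
      fin_cases i
      · exact hp0
      · exact hmul1
      · exact hmul2
      · exact hmul3
    rw [hQ.fderiv]
    have h1 := ck_sk_sq κ₁ (y 0)
    have h2 := ck_sk_sq κ₂ (y 1)
    have h3 := Real.sin_sq_add_cos_sq (y 2)
    simp only [ContinuousLinearMap.pi_apply, Matrix.cons_val_zero, Matrix.cons_val_one,
      Matrix.head_cons, Matrix.cons_val_two, Matrix.tail_cons, Matrix.cons_val_three,
      D0, D1, D2, D3, D12, P, ContinuousLinearMap.add_apply, ContinuousLinearMap.smul_apply,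
      ContinuousLinearMap.proj_apply, smul_eq_mul]
    rw [one_div, inv_mul_eq_iff_eq_mul₀ hκ₁]
    linear_combination (κ₁ * u 0 * v 0) * h1
      + (κ₁ * (c1 ^ 2 * u 0 * v 0 + κ₂ * s1 ^ 2 * u 1 * v 1)) * h2
      + (κ₁ * κ₂ * ((c1 * s2 * u 0 + s1 * c2 * u 1) * (c1 * s2 * v 0 + s1 * c2 * v 1)
          + s1 * s2 * u 2 * (s1 * s2 * v 2))) * h3


end
end Paper
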